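/- The dual iterates of Algorithm (DFG) remain bounded: for every x* ∈ X* and all k ≥ 0, ‖x^k − x*‖ ≤ ‖x^0 − x*‖ and ‖w^k − x*‖ ≤ ‖x^0 − x*‖, where w^k = x^{k−1} + θ_k (x^k − x^{k−1}) (with w^0 = x^0). -/

import Mathlib

set_option maxHeartbeats 4000000

private lemma sq_le_imp {a b : ℝ} (ha : 0 ≤ a) (hb : 0 ≤ b) (hab : a ^ 2 ≤ b ^ 2) : a ≤ b := by
  nlinarith

open scoped RealInnerProductSpace

theorem stmt_9 {n p : ℕ}
    (f : EuclideanSpace ℝ (Fin n) → ℝ) (σf : ℝ) (hσf : 0 < σf)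
    (hfc : Continuous f) (hfsc : StrongConvexOn Set.univ σf f)
    (U : Set (EuclideanSpace ℝ (Fin n))) (hUne : U.Nonempty) (hUcl : IsClosed U) (hUcv : Convex ℝ U)
    (G : EuclideanSpace ℝ (Fin n) →L[ℝ] EuclideanSpace ℝ (Fin p)) (hG : G ≠ 0) (g : EuclideanSpace ℝ (Fin p))
    (K : Set (EuclideanSpace ℝ (Fin p))) (hKne : K.Nonempty) (hKcl : IsClosed K) (hKcv : Convex ℝ K)
    (hKcone : ∀ c : ℝ, 0 ≤ c → ∀ v ∈ K, c • v ∈ K)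
    (Kstar : Set (EuclideanSpace ℝ (Fin p)))
    (hKstar : Kstar = {x : EuclideanSpace ℝ (Fin p) | ∀ v ∈ K, 0 ≤ ⟪x, v⟫})
    (Lag : EuclideanSpace ℝ (Fin n) → EuclideanSpace ℝ (Fin p) → ℝ)
    (hLag : ∀ u x, Lag u x = f u + ⟪x, -(G u) - g⟫)
    (uu : EuclideanSpace ℝ (Fin p) → EuclideanSpace ℝ (Fin n))
    (huu : ∀ x : EuclideanSpace ℝ (Fin p), uu x ∈ U ∧ ∀ u ∈ U, Lag (uu x) x ≤ Lag u x)
    (d : EuclideanSpace ℝ (Fin p) → ℝ) (hd : ∀ x, d x = Lag (uu x) x)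
    (ustar : EuclideanSpace ℝ (Fin n))
    (hustar : ustar ∈ U ∧ G ustar + g ∈ K ∧ ∀ u ∈ U, G u + g ∈ K → f ustar ≤ f u)
    (fstar : ℝ) (hfstar : fstar = f ustar)
    (Xstar : Set (EuclideanSpace ℝ (Fin p))) (hXstar : Xstar = {x ∈ Kstar | d x = fstar})
    (hXne : Xstar.Nonempty)
    (Ld : ℝ) (hLd : Ld = ‖G‖ ^ 2 / σf)
    (projKs : EuclideanSpace ℝ (Fin p) → EuclideanSpace ℝ (Fin p))
    (hprojKs : ∀ z : EuclideanSpace ℝ (Fin p), projKs z ∈ Kstar ∧ ∀ w ∈ Kstar, ‖z - projKs z‖ ≤ ‖z - w‖)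
    (θ : ℕ → ℝ) (hθ0 : θ 0 = 0) (hθ1 : θ 1 = 1)
    (hθrec : ∀ k, 1 ≤ k → θ (k + 1) = (1 + Real.sqrt (1 + 4 * θ k ^ 2)) / 2)
    (x y : ℕ → EuclideanSpace ℝ (Fin p)) (hx0K : x 0 ∈ Kstar) (hy1 : y 1 = x 0)
    (hxrec : ∀ k, 1 ≤ k → x k = projKs (y k + (1 / Ld) • (-(G (uu (y k))) - g)))
    (hyrec : ∀ k, 1 ≤ k →
      y (k + 1) = x k + ((θ k - 1) / θ (k + 1)) • (x k - x (k - 1)))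
    (w : ℕ → EuclideanSpace ℝ (Fin p)) (hw0 : w 0 = x 0)
    (hwrec : ∀ k, w (k + 1) = x k + θ (k + 1) • (x (k + 1) - x k))
 :
    ∀ xs ∈ Xstar, ∀ k : ℕ,
      ‖x k - xs‖ ≤ ‖x 0 - xs‖ ∧ ‖w k - xs‖ ≤ ‖x 0 - xs‖ := by
  intro xs hxs
  have hGn : (0:ℝ) < ‖G‖ := norm_pos_iff.mpr hG
  have hLdpos : 0 < Ld := by rw [hLd]; positivity
  set h : EuclideanSpace ℝ (Fin p) → EuclideanSpace ℝ (Fin p) :=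
    fun z => -(G (uu z)) - g with hhdef
  have hhap : ∀ z, h z = -(G (uu z)) - g := fun z => rfl
  rw [hXstar] at hxs
  obtain ⟨hxsK, hdxs⟩ := hxs
  -- Kstar is convex
  have hKsconv : Convex ℝ Kstar := by
    rw [hKstar]
    intro a ha b hb s t hs ht hst
    intro v hv
    have ha' := ha v hv
    have hb' := hb v hv
    simp only [inner_add_left, real_inner_smul_left]
    positivity
  -- weak duality
  have hweak : ∀ z ∈ Kstar, d z ≤ fstar := by
    intro z hz
    have h1 : Lag (uu z) z ≤ Lag ustar z := (huu z).2 ustar hustar.1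
    have h2 : Lag ustar z = f ustar + ⟪z, -(G ustar) - g⟫ := hLag _ _
    have h3 : -(G ustar) - g = -(G ustar + g) := by abel
    have h4 : (0:ℝ) ≤ ⟪z, G ustar + g⟫ := by
      rw [hKstar] at hz; exact hz _ hustar.2.1
    rw [hd, hfstar]
    have : ⟪z, -(G ustar) - g⟫ = -⟪z, G ustar + g⟫ := by rw [h3, inner_neg_right]
    linarith [h1, h2.le, h2.ge]
  -- strong convexity of the Lagrangian: quadratic growth at the minimizer
  have hstrong : ∀ z v, v ∈ U →
      Lag (uu z) z + σf / 2 * ‖v - uu z‖ ^ 2 ≤ Lag v z := by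
    intro z v hv
    set u := uu z with hu
    have huU : u ∈ U := (huu z).1
    have hmin := (huu z).2
    have hC : (0:ℝ) ≤ σf / 2 * ‖v - u‖ ^ 2 := by positivity
    have hB : 0 ≤ Lag v z - Lag u z := by linarith [hmin v hv]
    -- for every t ∈ (0,1), (1-t) * (σf/2 ‖v-u‖²) ≤ Lag v z - Lag u z
    have hmain : ∀ t : ℝ, 0 < t → t < 1 →
        (1 - t) * (σf / 2 * ‖v - u‖ ^ 2) ≤ Lag v z - Lag u z := by
      intro t ht0 ht1
      have ha : (0:ℝ) ≤ 1 - t := by linarith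
      have hb : (0:ℝ) ≤ t := le_of_lt ht0
      have hab : (1 - t) + t = 1 := by ring
      have hf1 := hfsc.2 (Set.mem_univ u) (Set.mem_univ v) ha hb hab
      have hm : (1 - t) • u + t • v ∈ U := hUcv huU hv ha hb hab
      have hL1 : Lag u z ≤ Lag ((1 - t) • u + t • v) z := hmin _ hm
      -- linear part is affine
      have hlin : ⟪z, -(G ((1 - t) • u + t • v)) - g⟫
          = (1 - t) * ⟪z, -(G u) - g⟫ + t * ⟪z, -(G v) - g⟫ := by
        have hGv : G ((1 - t) • u + t • v) = (1 - t) • G u + t • G v := by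
          rw [map_add, map_smul, map_smul]
        rw [hGv]
        have hvec : -((1 - t) • G u + t • G v) - g
            = (1 - t) • (-(G u) - g) + t • (-(G v) - g) := by
          match_scalars <;> ring
        rw [hvec, inner_add_right, real_inner_smul_right, real_inner_smul_right]
      have hLcomb : Lag ((1 - t) • u + t • v) z
          ≤ (1 - t) * Lag u z + t * Lag v z
            - (1 - t) * t * (σf / 2 * ‖u - v‖ ^ 2) := by
        rw [hLag, hLag, hLag, hlin]
        simp only [smul_eq_mul] at hf1
        nlinarith [hf1]
      have hnrm : ‖u - v‖ = ‖v - u‖ := norm_sub_rev _ _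
      rw [hnrm] at hLcomb
      nlinarith [hL1, hLcomb]
    by_contra hcon
    push_neg at hcon
    set C := σf / 2 * ‖v - u‖ ^ 2 with hCdef
    set B := Lag v z - Lag u z with hBdef
    have hBC : B < C := by simp only [hCdef, hBdef]; linarith
    have hCpos : 0 < C := lt_of_le_of_lt hB hBC
    have h2C : (0:ℝ) < 2 * C := by linarith
    have ht0 : 0 < (C - B) / (2 * C) := div_pos (by linarith) h2C
    have ht1 : (C - B) / (2 * C) < 1 := by
      rw [div_lt_one h2C]; linarith
    have := hmain _ ht0 ht1
    have hexp : (1 - (C - B) / (2 * C)) * C = C - (C - B) / 2 := by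
      field_simp
    rw [hexp] at this
    linarith
  -- Lipschitz gradient
  have hLagdiff : ∀ (u0 : EuclideanSpace ℝ (Fin n)) (z1 z2 : EuclideanSpace ℝ (Fin p)),
      Lag u0 z1 - Lag u0 z2 = ⟪z1 - z2, -(G u0) - g⟫ := by
    intro u0 z1 z2
    rw [hLag, hLag, inner_sub_left]
    ring
  have huulip : ∀ a b, ‖uu a - uu b‖ ≤ ‖G‖ / σf * ‖a - b‖ := by
    intro a b
    have h1 := hstrong a (uu b) (huu b).1
    have h2 := hstrong b (uu a) (huu a).1
    have hnrm : ‖uu a - uu b‖ = ‖uu b - uu a‖ := norm_sub_rev _ _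
    set D := ‖uu a - uu b‖ with hD
    have hDnn : 0 ≤ D := norm_nonneg _
    -- sum of the two inequalities
    have hsum : σf * D ^ 2 ≤ (Lag (uu b) a - Lag (uu b) b) - (Lag (uu a) a - Lag (uu a) b) := by
      rw [← hnrm] at h1
      nlinarith [h1, h2]
    have he1 : Lag (uu b) a - Lag (uu b) b = ⟪a - b, -(G (uu b)) - g⟫ := hLagdiff _ _ _
    have he2 : Lag (uu a) a - Lag (uu a) b = ⟪a - b, -(G (uu a)) - g⟫ := hLagdiff _ _ _
    have he3 : (Lag (uu b) a - Lag (uu b) b) - (Lag (uu a) a - Lag (uu a) b)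
        = ⟪a - b, G (uu a) - G (uu b)⟫ := by
      rw [he1, he2, ← inner_sub_right]
      congr 1
      abel
    have he4 : G (uu a) - G (uu b) = G (uu a - uu b) := by rw [map_sub]
    have hcs : ⟪a - b, G (uu a - uu b)⟫ ≤ ‖a - b‖ * (‖G‖ * D) := by
      calc ⟪a - b, G (uu a - uu b)⟫ ≤ ‖a - b‖ * ‖G (uu a - uu b)‖ := real_inner_le_norm _ _
        _ ≤ ‖a - b‖ * (‖G‖ * D) := by
            have := G.le_opNorm (uu a - uu b)
            exact mul_le_mul_of_nonneg_left (by rw [hD]; exact this) (norm_nonneg _)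
    have hfin : σf * D ^ 2 ≤ ‖a - b‖ * (‖G‖ * D) := by
      rw [he3, he4] at hsum
      linarith
    rcases eq_or_lt_of_le hDnn with h0 | h0
    · rw [← h0]
      positivity
    · rw [div_mul_eq_mul_div, le_div_iff₀ hσf]
      nlinarith [hfin, h0]
  have hlip : ∀ a b, ‖h a - h b‖ ≤ Ld * ‖a - b‖ := by
    intro a b
    have h1 : h a - h b = G (uu b - uu a) := by
      rw [hhap, hhap, map_sub]
      abel
    rw [h1]
    calc ‖G (uu b - uu a)‖ ≤ ‖G‖ * ‖uu b - uu a‖ := G.le_opNorm _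
      _ ≤ ‖G‖ * (‖G‖ / σf * ‖b - a‖) :=
          mul_le_mul_of_nonneg_left (huulip b a) (norm_nonneg _)
      _ = Ld * ‖a - b‖ := by rw [hLd, norm_sub_rev]; field_simp
  -- concavity upper bound
  have hconc : ∀ a b, d a ≤ d b + ⟪h b, a - b⟫ := by
    intro a b
    have h1 : Lag (uu a) a ≤ Lag (uu b) a := (huu a).2 _ (huu b).1
    have h2 : Lag (uu b) a - Lag (uu b) b = ⟪a - b, -(G (uu b)) - g⟫ := hLagdiff _ _ _
    rw [hd, hd, hhap, real_inner_comm]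
    linarith [h1, h2.le, h2.ge]
  -- descent lemma
  -- Bregman gap of the concave function d
  have hgap : ∀ (c : ℕ), ∀ a b,
      d b + ⟪h b, a - b⟫ - d a ≤ (1/2 + (1/2) ^ (c + 1)) * (Ld * ‖a - b‖ ^ 2) := by
    intro c
    induction c with
    | zero =>
      intro a b
      have h1 := hconc b a
      have h2 : ⟪h a, b - a⟫ = -⟪h a, a - b⟫ := by
        have : b - a = -(a - b) := by abel
        rw [this, inner_neg_right]
      have h3 : ⟪h b - h a, a - b⟫ = ⟪h b, a - b⟫ - ⟪h a, a - b⟫ :=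
        inner_sub_left (h b) (h a) (a - b)
      have h4 : ⟪h b - h a, a - b⟫ ≤ ‖h b - h a‖ * ‖a - b‖ := real_inner_le_norm _ _
      have h5 : ‖h b - h a‖ ≤ Ld * ‖b - a‖ := hlip b a
      have h6 : ‖b - a‖ = ‖a - b‖ := norm_sub_rev _ _
      have h7 : ‖h b - h a‖ * ‖a - b‖ ≤ Ld * ‖a - b‖ * ‖a - b‖ := by
        rw [h6] at h5
        exact mul_le_mul_of_nonneg_right h5 (norm_nonneg _)
      have h8 : (1/2 + ((1:ℝ)/2) ^ (0 + 1)) * (Ld * ‖a - b‖ ^ 2)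
          = Ld * ‖a - b‖ * ‖a - b‖ := by ring
      rw [h8]
      linarith [h1, h2.le, h2.ge, h3.le, h3.ge, h4, h7]
    | succ c ih =>
      intro a b
      set m : EuclideanSpace ℝ (Fin p) := (1/2 : ℝ) • (a + b) with hm
      have ham : a - m = (1/2 : ℝ) • (a - b) := by rw [hm]; match_scalars <;> ring
      have hmb : m - b = (1/2 : ℝ) • (a - b) := by rw [hm]; match_scalars <;> ring
      have hnam : ‖a - m‖ = 1/2 * ‖a - b‖ := by
        rw [ham, norm_smul]; norm_num
      have hnmb : ‖m - b‖ = 1/2 * ‖a - b‖ := by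
        rw [hmb, norm_smul]; norm_num
      have e1 : ⟪h b, a - b⟫ = ⟪h b, a - m⟫ + ⟪h b, m - b⟫ := by
        rw [← inner_add_right]
        congr 1
        abel
      have e2 : ⟪h b - h m, a - m⟫ = ⟪h b, a - m⟫ - ⟪h m, a - m⟫ :=
        inner_sub_left (h b) (h m) (a - m)
      have hid : d b + ⟪h b, a - b⟫ - d a
          = (d b + ⟪h b, m - b⟫ - d m) + (d m + ⟪h m, a - m⟫ - d a)
            + ⟪h b - h m, a - m⟫ := by
        rw [e1, e2]
        ring
      have i1 := ih m b
      have i2 := ih a m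
      have icross : ⟪h b - h m, a - m⟫ ≤ Ld * (1/2 * ‖a - b‖) * (1/2 * ‖a - b‖) := by
        calc ⟪h b - h m, a - m⟫ ≤ ‖h b - h m‖ * ‖a - m‖ := real_inner_le_norm _ _
          _ ≤ (Ld * ‖b - m‖) * ‖a - m‖ :=
              mul_le_mul_of_nonneg_right (hlip b m) (norm_nonneg _)
          _ = Ld * (1/2 * ‖a - b‖) * (1/2 * ‖a - b‖) := by
              rw [norm_sub_rev, hnmb, hnam]
              try ring
      rw [hnmb] at i1
      rw [hnam] at i2
      rw [hid]
      have hpow : (1/2 + ((1:ℝ)/2) ^ (c + 1 + 1)) * (Ld * ‖a - b‖ ^ 2)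
          = (1/2 + (1/2) ^ (c + 1)) * (Ld * (1/2 * ‖a - b‖) ^ 2) * 2
            + Ld * (1/2 * ‖a - b‖) * (1/2 * ‖a - b‖) := by ring
      rw [hpow]
      linarith [i1, i2, icross]
  have hdesc : ∀ a b, d b + ⟪h b, a - b⟫ - Ld / 2 * ‖a - b‖ ^ 2 ≤ d a := by
    intro a b
    have hlim : Filter.Tendsto
        (fun c : ℕ => (1/2 + (1/2:ℝ) ^ (c + 1)) * (Ld * ‖a - b‖ ^ 2))
        Filter.atTop (nhds ((1/2 + 0) * (Ld * ‖a - b‖ ^ 2))) := by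
      apply Filter.Tendsto.mul_const
      apply Filter.Tendsto.const_add
      have hpow : Filter.Tendsto (fun c : ℕ => ((1:ℝ)/2) ^ c) Filter.atTop (nhds 0) :=
        tendsto_pow_atTop_nhds_zero_of_lt_one (by norm_num) (by norm_num)
      exact hpow.comp (Filter.tendsto_add_atTop_nat 1)
    have hle : d b + ⟪h b, a - b⟫ - d a ≤ (1/2 + 0) * (Ld * ‖a - b‖ ^ 2) :=
      ge_of_tendsto' hlim (fun c => hgap c a b)
    have : (1/2 + (0:ℝ)) * (Ld * ‖a - b‖ ^ 2) = Ld / 2 * ‖a - b‖ ^ 2 := by ring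
    linarith [hle, this.le, this.ge]
  -- projection variational inequality
  have hVI : ∀ z, ∀ u ∈ Kstar, ⟪z - projKs z, u - projKs z⟫ ≤ 0 := by
    intro z u hu
    set q := projKs z with hq
    have hqK : q ∈ Kstar := (hprojKs z).1
    have hdist := (hprojKs z).2
    have hmain : ∀ t : ℝ, 0 < t → t ≤ 1 →
        2 * ⟪z - q, u - q⟫ ≤ t * ‖u - q‖ ^ 2 := by
      intro t ht0 ht1
      have hmem : q + t • (u - q) ∈ Kstar := by
        have : q + t • (u - q) = (1 - t) • q + t • u := by
          match_scalars <;> ring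
        rw [this]
        exact hKsconv hqK hu (by linarith) ht0.le (by ring)
      have hle := hdist _ hmem
      have hsq : ‖z - q‖ ^ 2 ≤ ‖z - (q + t • (u - q))‖ ^ 2 := by
        nlinarith [norm_nonneg (z - q), norm_nonneg (z - (q + t • (u - q)))]
      have hexp : ‖z - (q + t • (u - q))‖ ^ 2
          = ‖z - q‖ ^ 2 - 2 * (t * ⟪z - q, u - q⟫) + t ^ 2 * ‖u - q‖ ^ 2 := by
        have hv : z - (q + t • (u - q)) = (z - q) - t • (u - q) := by abel
        rw [hv, norm_sub_sq_real, real_inner_smul_right, norm_smul]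
        rw [Real.norm_eq_abs, abs_of_pos ht0]
        ring
      rw [hexp] at hsq
      nlinarith [hsq, ht0]
    by_contra hcon
    push_neg at hcon
    rcases eq_or_lt_of_le (sq_nonneg ‖u - q‖) with h0 | h0
    · have := hmain 1 one_pos le_rfl
      rw [← h0] at this
      linarith
    · set t := min 1 (⟪z - q, u - q⟫ / ‖u - q‖ ^ 2) with ht
      have htpos : 0 < t := lt_min one_pos (div_pos hcon h0)
      have ht1 : t ≤ 1 := min_le_left _ _
      have := hmain t htpos ht1
      have htle : t * ‖u - q‖ ^ 2 ≤ ⟪z - q, u - q⟫ := by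
        have h2 : t ≤ ⟪z - q, u - q⟫ / ‖u - q‖ ^ 2 := min_le_right _ _
        rw [← le_div_iff₀ h0]
        exact h2
      linarith
  -- key inequality
  have hkey : ∀ k, 1 ≤ k → ∀ u ∈ Kstar,
      d u ≤ d (x k) - Ld / 2 * ‖x k - y k‖ ^ 2 - Ld * ⟪y k - u, x k - y k⟫ := by
    intro k hk u hu
    set Y := y k with hY
    set Z := x k with hZ
    have hZdef : Z = projKs (Y + (1 / Ld) • h Y) := by
      rw [hZ, hxrec k hk, hhap]
    have hvi : ⟪(Y + (1 / Ld) • h Y) - Z, u - Z⟫ ≤ 0 := by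
      rw [hZdef]
      exact hVI _ u hu
    have hsplit : (Y + (1 / Ld) • h Y) - Z = (Y - Z) + (1 / Ld) • h Y := by abel
    have hvi2 : ⟪Y - Z, u - Z⟫ + (1 / Ld) * ⟪h Y, u - Z⟫ ≤ 0 := by
      have e : ⟪(Y + (1 / Ld) • h Y) - Z, u - Z⟫
          = ⟪Y - Z, u - Z⟫ + (1 / Ld) * ⟪h Y, u - Z⟫ := by
        rw [hsplit, inner_add_left, real_inner_smul_left]
      linarith [hvi, e.le, e.ge]
    have hvi3 : ⟪h Y, u - Z⟫ ≤ Ld * ⟪Z - Y, u - Z⟫ := by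
      have e2 : ⟪Z - Y, u - Z⟫ = -⟪Y - Z, u - Z⟫ := by
        have : Z - Y = -(Y - Z) := by abel
        rw [this, inner_neg_left]
      have h3 : Ld * (⟪Y - Z, u - Z⟫ + (1 / Ld) * ⟪h Y, u - Z⟫) ≤ Ld * 0 :=
        mul_le_mul_of_nonneg_left hvi2 hLdpos.le
      have h6 : Ld * ((1/Ld) * ⟪h Y, u - Z⟫) = ⟪h Y, u - Z⟫ := by
        field_simp
      rw [mul_add, h6, mul_zero] at h3
      rw [e2]
      linarith [h3]
    have hup : d u ≤ d Y + ⟪h Y, u - Y⟫ := hconc u Y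
    have hdn : d Y + ⟪h Y, Z - Y⟫ - Ld / 2 * ‖Z - Y‖ ^ 2 ≤ d Z := hdesc Z Y
    have hsplit2 : ⟪h Y, u - Y⟫ = ⟪h Y, u - Z⟫ + ⟪h Y, Z - Y⟫ := by
      rw [← inner_add_right]
      congr 1
      abel
    have hss : ⟪Z - Y, Z - Y⟫ = ‖Z - Y‖ ^ 2 := real_inner_self_eq_norm_sq _
    have hsplit3 : ⟪Z - Y, u - Z⟫ = ⟪Z - Y, u - Y⟫ - ‖Z - Y‖ ^ 2 := by
      have hv : u - Z = (u - Y) - (Z - Y) := by abel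
      have hx2 : ⟪Z - Y, u - Z⟫ = ⟪Z - Y, u - Y⟫ - ⟪Z - Y, Z - Y⟫ := by
        rw [hv, inner_sub_right]
      rw [hx2, hss]
    have hcomm : ⟪Z - Y, u - Y⟫ = -⟪Y - u, Z - Y⟫ := by
      rw [real_inner_comm]
      have : Y - u = -(u - Y) := by abel
      rw [this, inner_neg_left, neg_neg]
    have e3 : Ld * ⟪Z - Y, u - Z⟫ = Ld * ⟪Z - Y, u - Y⟫ - Ld * ‖Z - Y‖ ^ 2 := by
      rw [hsplit3]; ring
    have e4 : Ld * ⟪Z - Y, u - Y⟫ = -(Ld * ⟪Y - u, Z - Y⟫) := by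
      rw [hcomm]; ring
    have hvi4 : ⟪h Y, u - Z⟫ ≤ -(Ld * ⟪Y - u, Z - Y⟫) - Ld * ‖Z - Y‖ ^ 2 := by
      rw [← e4, ← e3]
      linarith [hvi3]
    linarith [hup, hdn, hsplit2.le, hsplit2.ge, hvi4]
  -- second form of key inequality (scaled)
  have hkey2 : ∀ k, 1 ≤ k → ∀ u ∈ Kstar,
      Ld * ‖x k - u‖ ^ 2 ≤ Ld * ‖y k - u‖ ^ 2 + 2 * (d (x k) - d u) := by
    intro k hk u hu
    have h1 := hkey k hk u hu
    have hv : x k - u = (x k - y k) + (y k - u) := by abel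
    have h2 : ‖x k - u‖ ^ 2
        = ‖x k - y k‖ ^ 2 + 2 * ⟪x k - y k, y k - u⟫ + ‖y k - u‖ ^ 2 := by
      rw [hv, norm_add_sq_real]
    have h3 : ⟪x k - y k, y k - u⟫ = ⟪y k - u, x k - y k⟫ := real_inner_comm _ _
    nlinarith [h1, h2.le, h2.ge, h3.le, h3.ge]
  -- theta facts
  have hθge1 : ∀ k, 1 ≤ k → 1 ≤ θ k := by
    intro k hk
    induction k, hk using Nat.le_induction with
    | base => exact hθ1.ge
    | succ k hk ih =>
      rw [hθrec k hk]
      have h1 : (1:ℝ) ≤ 1 + 4 * θ k ^ 2 := by nlinarith [sq_nonneg (θ k)]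
      have h2 : (1:ℝ) ≤ Real.sqrt (1 + 4 * θ k ^ 2) := by
        have h3 := Real.sqrt_le_sqrt h1
        rwa [Real.sqrt_one] at h3
      linarith
  have hθsq : ∀ k, 1 ≤ k → θ (k + 1) * (θ (k + 1) - 1) = θ k ^ 2 := by
    intro k hk
    have hnn : (0:ℝ) ≤ 1 + 4 * θ k ^ 2 := by positivity
    have hs : Real.sqrt (1 + 4 * θ k ^ 2) ^ 2 = 1 + 4 * θ k ^ 2 := Real.sq_sqrt hnn
    rw [hθrec k hk]
    nlinarith [hs]
  -- iterates in Kstar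
  have hxK : ∀ k, x k ∈ Kstar := by
    intro k
    rcases Nat.eq_zero_or_pos k with hk | hk
    · rw [hk]; exact hx0K
    · rw [hxrec k hk]; exact (hprojKs _).1
  -- Lyapunov function
  set Φ : ℕ → ℝ := fun k => 2 * θ k ^ 2 * (fstar - d (x k)) + Ld * ‖w k - xs‖ ^ 2 with hΦdef
  have hstep : ∀ k, 1 ≤ k → Φ (k + 1) ≤ Φ k := by
    intro k hk
    have hT1 : 1 ≤ θ (k + 1) := hθge1 (k + 1) (by omega)
    have hT0 : 0 ≤ θ (k + 1) := by linarith
    have hTne : θ (k + 1) ≠ 0 := by linarith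
    have hk1 : k - 1 + 1 = k := Nat.succ_pred_eq_of_pos hk
    have hwk : w k = x (k - 1) + θ k • (x k - x (k - 1)) := by
      have := hwrec (k - 1)
      rwa [hk1] at this
    have hyk1 := hyrec k hk
    have i1 := hkey (k + 1) (by omega) (x k) (hxK k)
    have i2 := hkey (k + 1) (by omega) xs hxsK
    rw [hdxs] at i2
    -- vector identities
    have hA : w k - xs = (θ (k + 1) - 1) • (y (k + 1) - x k) + (y (k + 1) - xs) := by
      rw [hwk, hyk1]
      match_scalars <;> field_simp <;> ring
    have hB : w (k + 1) - xs = (w k - xs) + θ (k + 1) • (x (k + 1) - y (k + 1)) := by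
      rw [hwrec k, hwk, hyk1]
      match_scalars <;> field_simp <;> ring
    have hBsq : ‖w (k + 1) - xs‖ ^ 2
        = ‖w k - xs‖ ^ 2 + 2 * (θ (k + 1) * ⟪w k - xs, x (k + 1) - y (k + 1)⟫)
          + θ (k + 1) ^ 2 * ‖x (k + 1) - y (k + 1)‖ ^ 2 := by
      rw [hB, norm_add_sq_real, real_inner_smul_right, norm_smul,
        Real.norm_eq_abs, abs_of_nonneg hT0]
      ring
    have hAin : ⟪w k - xs, x (k + 1) - y (k + 1)⟫
        = (θ (k + 1) - 1) * ⟪y (k + 1) - x k, x (k + 1) - y (k + 1)⟫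
          + ⟪y (k + 1) - xs, x (k + 1) - y (k + 1)⟫ := by
      rw [hA, inner_add_left, real_inner_smul_left]
    -- scalar abbreviations
    set T := θ (k + 1) with hTdef
    set s := ‖x (k + 1) - y (k + 1)‖ ^ 2 with hsdef
    set P := ⟪y (k + 1) - x k, x (k + 1) - y (k + 1)⟫ with hPdef
    set Q := ⟪y (k + 1) - xs, x (k + 1) - y (k + 1)⟫ with hQdef
    have i1' : (fstar - d (x (k + 1))) ≤ (fstar - d (x k)) - Ld / 2 * s - Ld * P := by
      linarith [i1]
    have i2' : (fstar - d (x (k + 1))) ≤ - (Ld / 2 * s) - Ld * Q := by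
      linarith [i2]
    have m1 := mul_le_mul_of_nonneg_left i1' (by linarith : (0:ℝ) ≤ T - 1)
    have comb : T * (fstar - d (x (k + 1)))
        ≤ (T - 1) * (fstar - d (x k)) - Ld / 2 * T * s - Ld * ((T - 1) * P + Q) := by
      nlinarith [m1, i2']
    have m2 := mul_le_mul_of_nonneg_left comb hT0
    have hθk : θ k ^ 2 = T * (T - 1) := (hθsq k hk).symm
    simp only [hΦdef]
    rw [hBsq, hAin, hθk]
    linarith [m2]
  have hbase : Φ 1 ≤ Ld * ‖x 0 - xs‖ ^ 2 := by
    have hw1 : w 1 = x 1 := by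
      have h0 := hwrec 0
      rw [hθ1, one_smul] at h0
      rw [h0]
      abel
    have hk2 := hkey2 1 le_rfl xs hxsK
    rw [hy1, hdxs] at hk2
    simp only [hΦdef]
    rw [hθ1, hw1, one_pow]
    linarith [hk2]
  have hΦ : ∀ k, 1 ≤ k → Φ k ≤ Ld * ‖x 0 - xs‖ ^ 2 := by
    intro k hk
    induction k, hk using Nat.le_induction with
    | base => exact hbase
    | succ k hk ih => exact le_trans (hstep k hk) ih
  have hvnn : ∀ k, 0 ≤ fstar - d (x k) := fun k => by linarith [hweak (x k) (hxK k)]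
  have hwb : ∀ k, 1 ≤ k → ‖w k - xs‖ ≤ ‖x 0 - xs‖ := by
    intro k hk
    have h1 := hΦ k hk
    have h2 := hvnn k
    have h3 : (0:ℝ) ≤ θ k ^ 2 := sq_nonneg _
    have h4 : Ld * ‖w k - xs‖ ^ 2 ≤ Ld * ‖x 0 - xs‖ ^ 2 := by
      simp only [hΦdef] at h1; nlinarith
    have h5 : ‖w k - xs‖ ^ 2 ≤ ‖x 0 - xs‖ ^ 2 := (mul_le_mul_iff_right₀ hLdpos).mp h4
    exact sq_le_imp (norm_nonneg _) (norm_nonneg _) h5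
  have hxy : ∀ k, 1 ≤ k → ‖x k - xs‖ ≤ ‖y k - xs‖ := by
    intro k hk
    have h1 := hkey2 k hk xs hxsK
    have h2 : d (x k) - d xs ≤ 0 := by rw [hdxs]; linarith [hvnn k]
    have h4 : Ld * ‖x k - xs‖ ^ 2 ≤ Ld * ‖y k - xs‖ ^ 2 := by linarith
    exact sq_le_imp (norm_nonneg _) (norm_nonneg _) ((mul_le_mul_iff_right₀ hLdpos).mp h4)
  have hyb : ∀ k, 1 ≤ k → ‖y k - xs‖ ≤ ‖x 0 - xs‖ := by
    intro k hk
    induction k, hk using Nat.le_induction with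
    | base => rw [hy1]
    | succ k hk ih =>
      have hT1 : 1 ≤ θ (k + 1) := hθge1 (k + 1) (by omega)
      have hT0 : (0:ℝ) < θ (k + 1) := by linarith
      have hTne : θ (k + 1) ≠ 0 := by linarith
      have hk1 : k - 1 + 1 = k := Nat.succ_pred_eq_of_pos hk
      have hwk : w k = x (k - 1) + θ k • (x k - x (k - 1)) := by
        have := hwrec (k - 1)
        rwa [hk1] at this
      have hvec : y (k + 1) - xs
          = (1 - 1 / θ (k + 1)) • (x k - xs) + (1 / θ (k + 1)) • (w k - xs) := by
        rw [hyrec k hk, hwk]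
        match_scalars <;> field_simp <;> ring
      have hc1 : (0:ℝ) ≤ 1 - 1 / θ (k + 1) := by
        have : 1 / θ (k + 1) ≤ 1 := by
          rw [div_le_one hT0]; exact hT1
        linarith
      have hc2 : (0:ℝ) ≤ 1 / θ (k + 1) := by positivity
      have hxk : ‖x k - xs‖ ≤ ‖x 0 - xs‖ := le_trans (hxy k hk) ih
      have hwkb : ‖w k - xs‖ ≤ ‖x 0 - xs‖ := hwb k hk
      have hnorm : ‖y (k + 1) - xs‖
          ≤ (1 - 1 / θ (k + 1)) * ‖x k - xs‖ + (1 / θ (k + 1)) * ‖w k - xs‖ := by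
        rw [hvec]
        refine le_trans (norm_add_le _ _) ?_
        rw [norm_smul, norm_smul, Real.norm_eq_abs, Real.norm_eq_abs,
          abs_of_nonneg hc1, abs_of_nonneg hc2]
      have hfin : (1 - 1 / θ (k + 1)) * ‖x k - xs‖ + (1 / θ (k + 1)) * ‖w k - xs‖
          ≤ ‖x 0 - xs‖ := by
        have t1 := mul_le_mul_of_nonneg_left hxk hc1
        have t2 := mul_le_mul_of_nonneg_left hwkb hc2
        have : (1 - 1 / θ (k + 1)) * ‖x 0 - xs‖ + (1 / θ (k + 1)) * ‖x 0 - xs‖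
            = ‖x 0 - xs‖ := by ring
        linarith [t1, t2]
      linarith [hnorm, hfin]
  intro k
  rcases Nat.eq_zero_or_pos k with hk | hk
  · subst hk
    rw [hw0]
    exact ⟨le_refl _, le_refl _⟩
  · exact ⟨le_trans (hxy k hk) (hyb k hk), hwb k hk⟩
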